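/- Let $A \in \mathbb{R}^{n\times n}$, $B \in \mathbb{R}^{n\times 1}$, $\varepsilon > 0$, and suppose $P \succ 0$ (symmetric positive definite) satisfies the algebraic Riccati equation $PA + A^T P - P B B^T P + \varepsilon I_n = 0$. Let $g > 0$, $\alpha \geq 1/(2g)$, $k^T = \alpha B^T P$, and $\tilde{A} = A - g B k^T$. Then $P \tilde{A} + \tilde{A}^T P = -\tilde{Q}$ where $\tilde{Q} = (2\alpha g - 1) P B B^T P + \varepsilon I_n \succeq \varepsilon I_n \succ 0$; consequently $\tilde{A}$ is Hurwitz (all eigenvalues have negative real part). -/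

import Mathlib

open Matrix

private lemma isHermitian_smul_real {n : ℕ} {M : Matrix (Fin n) (Fin n) ℝ}
    (hM : M.IsHermitian) (c : ℝ) : (c • M).IsHermitian := by
  refine IsHermitian.ext fun i j => ?_
  have := hM.apply i j
  simp only [Matrix.smul_apply, smul_eq_mul, star_trivial] at *
  rw [this]

private lemma posSemidef_smul_aux {n : ℕ} {M : Matrix (Fin n) (Fin n) ℝ}
    (hM : M.PosSemidef) {c : ℝ} (hc : 0 ≤ c) : (c • M).PosSemidef := by
  refine posSemidef_iff_dotProduct_mulVec.mpr ⟨isHermitian_smul_real hM.1 c, fun x => ?_⟩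
  rw [smul_mulVec, dotProduct_smul, smul_eq_mul]
  exact mul_nonneg hc (hM.dotProduct_mulVec_nonneg x)

private lemma posDef_smul_one {n : ℕ} {ε : ℝ} (hε : 0 < ε) :
    (ε • (1 : Matrix (Fin n) (Fin n) ℝ)).PosDef := by
  refine posDef_iff_dotProduct_mulVec.mpr ⟨isHermitian_smul_real isHermitian_one ε, fun x hx => ?_⟩
  rw [smul_mulVec, dotProduct_smul, one_mulVec, smul_eq_mul]
  have h1 : (0:ℝ) < star x ⬝ᵥ x := by
    rcases lt_of_le_of_ne (dotProduct_star_self_nonneg x)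
      (fun h => hx (dotProduct_star_self_eq_zero.mp h.symm)) with h
    exact h
  exact mul_pos hε h1

private lemma re_dot_aux {n : ℕ} (M : Matrix (Fin n) (Fin n) ℝ) (v : Fin n → ℂ) :
    (star v ⬝ᵥ (M.map Complex.ofReal *ᵥ v)).re
      = (fun i => (v i).re) ⬝ᵥ (M *ᵥ fun i => (v i).re)
        + (fun i => (v i).im) ⬝ᵥ (M *ᵥ fun i => (v i).im) := by
  simp only [dotProduct, mulVec, map_apply, Pi.star_apply, Finset.mul_sum,
    ← Finset.sum_add_distrib, Complex.re_sum]
  refine Finset.sum_congr rfl fun i _ => Finset.sum_congr rfl fun j _ => ?_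
  simp only [Complex.mul_re, Complex.mul_im, Complex.ofReal_re, Complex.ofReal_im,
    Complex.star_def, Complex.conj_re, Complex.conj_im]
  ring

private lemma re_dot_pos {n : ℕ} {M : Matrix (Fin n) (Fin n) ℝ} (hM : M.PosDef)
    {v : Fin n → ℂ} (hv : v ≠ 0) :
    0 < (star v ⬝ᵥ (M.map Complex.ofReal *ᵥ v)).re := by
  rw [re_dot_aux]
  set x : Fin n → ℝ := fun i => (v i).re with hx
  set y : Fin n → ℝ := fun i => (v i).im with hy
  have hxy : x ≠ 0 ∨ y ≠ 0 := by
    by_contra h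
    push_neg at h
    apply hv
    funext i
    have h1 := congrFun h.1 i
    have h2 := congrFun h.2 i
    simp only [hx, hy, Pi.zero_apply] at h1 h2
    exact Complex.ext h1 h2
  have hxs : ∀ z : Fin n → ℝ, star z ⬝ᵥ (M *ᵥ z) = z ⬝ᵥ (M *ᵥ z) := fun z => by
    simp [star_trivial]
  rcases hxy with h | h
  · have h1 := hM.dotProduct_mulVec_pos h
    rw [hxs] at h1
    have h2 := hM.posSemidef.dotProduct_mulVec_nonneg y
    rw [hxs] at h2
    linarith
  · have h1 := hM.dotProduct_mulVec_pos h
    rw [hxs] at h1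
    have h2 := hM.posSemidef.dotProduct_mulVec_nonneg x
    rw [hxs] at h2
    linarith

theorem stmt_12 (n : ℕ) (A : Matrix (Fin n) (Fin n) ℝ) (B : Matrix (Fin n) (Fin 1) ℝ)
    (ε : ℝ) (hε : 0 < ε) (P : Matrix (Fin n) (Fin n) ℝ) (hP : P.PosDef)
    (hARE : P * A + Aᵀ * P - P * B * Bᵀ * P + ε • (1 : Matrix (Fin n) (Fin n) ℝ) = 0)
    (g α : ℝ) (hg : 0 < g) (hα : 1 / (2 * g) ≤ α)
    (kT : Matrix (Fin 1) (Fin n) ℝ) (hk : kT = α • (Bᵀ * P))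
    (Atil : Matrix (Fin n) (Fin n) ℝ) (hAtil : Atil = A - g • (B * kT))
    (Qtil : Matrix (Fin n) (Fin n) ℝ)
    (hQtil : Qtil = (2 * α * g - 1) • (P * B * Bᵀ * P) + ε • (1 : Matrix (Fin n) (Fin n) ℝ)) :
    P * Atil + Atilᵀ * P = -Qtil ∧
    ((2 * α * g - 1) • (P * B * Bᵀ * P)).PosSemidef ∧ Qtil.PosDef ∧
    (∀ μ ∈ spectrum ℂ (Atil.map Complex.ofReal), μ.re < 0) := by
  have hPt : Pᵀ = P := by
    ext i j
    have := hP.1.apply i j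
    simpa using this
  -- the Lyapunov equation
  have key : P * Atil + Atilᵀ * P = -Qtil := by
    have h0 : P * Atil + Atilᵀ * P + Qtil
        = P * A + Aᵀ * P - P * B * Bᵀ * P + ε • (1 : Matrix (Fin n) (Fin n) ℝ) := by
      subst hk hAtil hQtil
      simp only [transpose_sub, transpose_smul, transpose_mul, transpose_transpose, hPt,
        mul_sub, sub_mul, Matrix.smul_mul, Matrix.mul_smul, Matrix.mul_assoc]
      module
    rw [hARE] at h0
    linear_combination (norm := abel) h0
  -- coefficient nonnegativity
  have hcoef : (0:ℝ) ≤ 2 * α * g - 1 := by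
    have h2g : (0:ℝ) < 2 * g := by linarith
    have := (div_le_iff₀ h2g).mp hα
    nlinarith
  -- positive semidefiniteness
  have hS : (P * B * Bᵀ * P).PosSemidef := by
    have h := posSemidef_conjTranspose_mul_self (Bᵀ * P)
    have he : (Bᵀ * P)ᴴ * (Bᵀ * P) = P * B * Bᵀ * P := by
      rw [conjTranspose_eq_transpose_of_trivial, transpose_mul, transpose_transpose, hPt,
        Matrix.mul_assoc, Matrix.mul_assoc, Matrix.mul_assoc]
    rwa [he] at h
  have hS2 : ((2 * α * g - 1) • (P * B * Bᵀ * P)).PosSemidef := posSemidef_smul_aux hS hcoef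
  have hQ : Qtil.PosDef := by
    rw [hQtil, add_comm]
    exact (posDef_smul_one hε).add_posSemidef hS2
  refine ⟨key, hS2, hQ, ?_⟩
  -- spectral part
  intro μ hμ
  set Ac : Matrix (Fin n) (Fin n) ℂ := Atil.map Complex.ofReal with hAc
  -- get an eigenvector
  have hμ' : Module.End.HasEigenvalue (Matrix.toLinAlgEquiv' Ac) μ := by
    rw [Module.End.hasEigenvalue_iff_mem_spectrum, AlgEquiv.spectrum_eq]
    exact hμ
  obtain ⟨v, hv⟩ := hμ'.exists_hasEigenvector
  have hvne : v ≠ 0 := hv.right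
  have hvec : Ac *ᵥ v = μ • v := by
    have h := hv.apply_eq_smul
    rwa [Matrix.toLinAlgEquiv'_apply] at h
  -- complexified Lyapunov equation
  set Pc : Matrix (Fin n) (Fin n) ℂ := P.map Complex.ofReal with hPc
  set Qc : Matrix (Fin n) (Fin n) ℂ := Qtil.map Complex.ofReal with hQc
  have hC : Pc * Ac + Acᵀ * Pc = -Qc := by
    have h : Complex.ofRealHom.mapMatrix (P * Atil + Atilᵀ * P)
        = Complex.ofRealHom.mapMatrix (-Qtil) := congrArg _ key
    rw [_root_.map_add, _root_.map_mul, _root_.map_mul, _root_.map_neg] at h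
    simp only [RingHom.mapMatrix_apply] at h
    rw [Matrix.transpose_map] at h
    exact h
  -- star v commutes with the real matrix
  have hstar : Ac *ᵥ (star v) = star (Ac *ᵥ v) := by
    funext i
    simp only [mulVec, dotProduct, Pi.star_apply, star_sum, star_mul', hAc, map_apply]
    refine Finset.sum_congr rfl fun j _ => ?_
    rw [Complex.star_def, Complex.conj_ofReal, mul_comm]
  set q : ℂ := star v ⬝ᵥ (Pc *ᵥ v) with hq
  set r : ℂ := star v ⬝ᵥ (Qc *ᵥ v) with hr
  have hmain : (μ + (starRingEnd ℂ) μ) * q = -r := by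
    have h1 : star v ⬝ᵥ ((Pc * Ac) *ᵥ v) = μ * q := by
      rw [← Matrix.mulVec_mulVec, hvec, mulVec_smul, dotProduct_smul, smul_eq_mul, hq]
    have h2 : star v ⬝ᵥ ((Acᵀ * Pc) *ᵥ v) = (starRingEnd ℂ) μ * q := by
      rw [← Matrix.mulVec_mulVec, dotProduct_mulVec, Matrix.vecMul_transpose, hstar, hvec,
        star_smul, smul_dotProduct, smul_eq_mul]
      rfl
    have h3 : star v ⬝ᵥ ((Pc * Ac + Acᵀ * Pc) *ᵥ v) = star v ⬝ᵥ ((-Qc) *ᵥ v) := by rw [hC]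
    rw [add_mulVec, dotProduct_add, h1, h2, neg_mulVec, dotProduct_neg] at h3
    rw [add_mul, h3, hr]
  -- take real parts
  have hq_pos : 0 < q.re := re_dot_pos hP hvne
  have hr_pos : 0 < r.re := re_dot_pos hQ hvne
  have hre : 2 * μ.re * q.re = -r.re := by
    have h := congrArg Complex.re hmain
    rw [Complex.add_conj] at h
    simpa [Complex.mul_re] using h
  nlinarith
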